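/- Let {e^{tL}}_{t≥0} be a quantum dynamical semigroup of unital channels on M_d and let P := span{X ∈ M_d : L(X) = iaX for some a ∈ ℝ}. Then for every t ≥ 0, e^{tL} maps P bijectively onto P, and the restriction e^{tL}|_P is a trace-preserving *-automorphism of P: for all X, Y ∈ P, e^{tL}(XY) = e^{tL}(X)e^{tL}(Y), e^{tL}(X*) = e^{tL}(X)*, and tr(e^{tL}(X)) = tr(X). -/

import Mathlib

noncomputable section
open scoped Kronecker
open Filter Topology Matrix

/-- `M_d`, the algebra of `d × d` complex matrices. -/
abbrev Md (d : ℕ) := Matrix (Fin d) (Fin d) ℂ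

/-- `Ad_U : X ↦ U* X U` for a unitary `U`. -/
def adU {d : ℕ} (U : Matrix.unitaryGroup (Fin d) ℂ) : Md d →ₗ[ℂ] Md d where
  toFun X := (U : Md d)ᴴ * X * (U : Md d)
  map_add' X Y := by simp [Matrix.mul_add, Matrix.add_mul]
  map_smul' c X := by simp [Matrix.mul_smul, Matrix.smul_mul]

/-- A linear map is completely positive if it has a Kraus decomposition. -/
def IsCP {d : ℕ} (Φ : Md d →ₗ[ℂ] Md d) : Prop :=
  ∃ (n : ℕ) (V : Fin n → Md d), ∀ X, Φ X = ∑ j, (V j)ᴴ * X * (V j)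

def IsUnital {d : ℕ} (Φ : Md d →ₗ[ℂ] Md d) : Prop := Φ 1 = 1

def IsTracePreserving {d : ℕ} (Φ : Md d →ₗ[ℂ] Md d) : Prop :=
  ∀ X, (Φ X).trace = X.trace

def IsHermitianPreserving {d : ℕ} (Φ : Md d →ₗ[ℂ] Md d) : Prop :=
  ∀ X, Φ Xᴴ = (Φ X)ᴴ

/-- A unital quantum channel: CP, unital and trace-preserving. -/
def IsUnitalChannel {d : ℕ} (Φ : Md d →ₗ[ℂ] Md d) : Prop :=
  IsCP Φ ∧ IsUnital Φ ∧ IsTracePreserving Φ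

/-- A mixed unitary channel: a convex combination of unitary conjugations. -/
def IsMixedUnitary {d : ℕ} (Φ : Md d →ₗ[ℂ] Md d) : Prop :=
  ∃ (ℓ : ℕ) (U : Fin ℓ → Matrix.unitaryGroup (Fin d) ℂ) (lam : Fin ℓ → ℝ),
    (∀ j, 0 ≤ lam j) ∧ (∀ j, lam j ≤ 1) ∧ (∑ j, lam j = 1) ∧
    Φ = ∑ j, (lam j : ℂ) • adU (U j)

/-- The Choi matrix `J(Φ) = (1/d) ∑_{i,j} E_{ij} ⊗ Φ(E_{ij})`. -/
def choi {d : ℕ} (Φ : Md d →ₗ[ℂ] Md d) : Matrix (Fin d × Fin d) (Fin d × Fin d) ℂ :=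
  (d : ℂ)⁻¹ • ∑ i : Fin d, ∑ j : Fin d,
    (Matrix.single i j (1 : ℂ)) ⊗ₖ Φ (Matrix.single i j (1 : ℂ))

/-- `⟨Φ, Ψ⟩ = tr(J(Φ)* J(Ψ))`; this is a real number whenever `Φ, Ψ` are
Hermitian-preserving, so we record its real part. -/
def pairRe {d : ℕ} (Φ Ψ : Md d →ₗ[ℂ] Md d) : ℝ := (((choi Φ)ᴴ * choi Ψ).trace).re

/-- The Hilbert–Schmidt (Choi) norm `‖Φ‖₂ = tr(J(Φ)* J(Φ))^{1/2}`. -/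
def hsNorm {d : ℕ} (Φ : Md d →ₗ[ℂ] Md d) : ℝ := Real.sqrt (pairRe Φ Φ)

attribute [local instance] Matrix.normedAddCommGroup Matrix.normedSpace

/-- The exponential `e^{tL}` of a linear map `L` on `M_d`. -/
def expL {d : ℕ} (L : Md d →ₗ[ℂ] Md d) (t : ℝ) : Md d →ₗ[ℂ] Md d :=
  letI : NormedRing (Md d →L[ℂ] Md d) := ContinuousLinearMap.toNormedRing
  ((@NormedSpace.exp (Md d →L[ℂ] Md d) NormedRing.toRing _ NonUnitalSeminormedRing.toIsTopologicalRing
      ((t : ℂ) • (LinearMap.toContinuousLinearMap L)) :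
      Md d →L[ℂ] Md d)).toLinearMap

/-- `P = span{X : L X = i a X for some real a}`. -/
def periphGen {d : ℕ} (L : Md d →ₗ[ℂ] Md d) : Submodule ℂ (Md d) :=
  Submodule.span ℂ {X : Md d | ∃ a : ℝ, L X = ((a : ℂ) * Complex.I) • X}

namespace Stmt9Aux

instance instNRMd {d : ℕ} : NormedRing (Md d →L[ℂ] Md d) := ContinuousLinearMap.toNormedRing

instance instNAMd {d : ℕ} : NormedAlgebra ℂ (Md d →L[ℂ] Md d) := ContinuousLinearMap.toNormedAlgebra

instance instTRMd {d : ℕ} : IsTopologicalRing (Md d →L[ℂ] Md d) :=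
  NonUnitalSeminormedRing.toIsTopologicalRing

instance instCSMd {d : ℕ} : @CompleteSpace (Md d →L[ℂ] Md d)
    (@PseudoMetricSpace.toUniformSpace _ (@SeminormedRing.toPseudoMetricSpace _
      (@NormedRing.toSeminormedRing _ instNRMd))) := by
  letI : NormedAddCommGroup (Md d →L[ℂ] Md d) := ContinuousLinearMap.toNormedAddCommGroup
  letI : NormedSpace ℂ (Md d →L[ℂ] Md d) := ContinuousLinearMap.toNormedSpace
  exact @FiniteDimensional.complete ℂ (Md d →L[ℂ] Md d) _ _ _ _ _
    SeminormedAddCommGroup.to_isUniformAddGroup _ _ _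

instance instNQMd {d : ℕ} : NormedAlgebra ℚ (Md d →L[ℂ] Md d) :=
  NormedAlgebra.restrictScalars ℚ ℂ _

set_option maxHeartbeats 1000000 in
lemma exp_apply_eigen {d : ℕ} (A : Md d →L[ℂ] Md d) (c : ℂ) (X : Md d)
    (hX : A X = c • X) : NormedSpace.exp A X = Complex.exp c • X := by
  have hpow : ∀ n : ℕ, (A ^ n) X = c ^ n • X := by
    intro n
    induction n with
    | zero => simp
    | succ n ih =>
      rw [pow_succ, ContinuousLinearMap.mul_apply, hX, _root_.map_smul, ih, smul_smul,
        pow_succ, mul_comm]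
  have heq : ∀ n : ℕ, (((Nat.factorial n : ℂ))⁻¹ • A ^ n) X
      = (((Nat.factorial n : ℂ))⁻¹ • c ^ n) • X := by
    intro n
    rw [ContinuousLinearMap.smul_apply, hpow, smul_smul, smul_eq_mul]
  have h1 : HasSum (fun n : ℕ => (((Nat.factorial n : ℂ))⁻¹ • A ^ n) X)
      (NormedSpace.exp A X) :=
    (NormedSpace.exp_series_hasSum_exp' (𝕂 := ℂ) A).mapL (ContinuousLinearMap.apply ℂ (Md d) X)
  have h2 : HasSum (fun n : ℕ => (((Nat.factorial n : ℂ))⁻¹ • c ^ n) • X)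
      (Complex.exp c • X) := by
    have h3 := (NormedSpace.exp_series_hasSum_exp' (𝕂 := ℂ) c).smul_const X
    rwa [← Complex.exp_eq_exp_ℂ] at h3
  simp only [heq] at h1
  exact h1.unique h2

lemma kraus_defect {d n : ℕ} (V : Fin n → Md d) (hV1 : ∑ j, (V j)ᴴ * V j = 1)
    (X W : Md d)
    (hW : ∑ j, (V j)ᴴ * X * V j = W)
    (hWH : ∑ j, (V j)ᴴ * Xᴴ * V j = Wᴴ) :
    ∑ j, (X * V j - V j * W)ᴴ * (X * V j - V j * W)
      = (∑ j, (V j)ᴴ * (Xᴴ * X) * V j) - Wᴴ * W := by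
  have step : ∀ j, (X * V j - V j * W)ᴴ * (X * V j - V j * W)
      = ((V j)ᴴ * (Xᴴ * X) * V j - ((V j)ᴴ * Xᴴ * V j) * W
          - Wᴴ * ((V j)ᴴ * X * V j)) + Wᴴ * ((V j)ᴴ * V j) * W := by
    intro j
    simp only [Matrix.conjTranspose_sub, Matrix.conjTranspose_mul]
    noncomm_ring
  rw [Finset.sum_congr rfl fun j _ => step j, Finset.sum_add_distrib,
    Finset.sum_sub_distrib, Finset.sum_sub_distrib, ← Finset.sum_mul, hWH,
    ← Finset.mul_sum, hW]
  have : ∑ j, Wᴴ * ((V j)ᴴ * V j) * W = Wᴴ * W := by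
    rw [← Finset.sum_mul, ← Finset.mul_sum, hV1, Matrix.mul_one]
  rw [this]
  abel

lemma trace_ct_mul_self {d : ℕ} (A : Md d) :
    (Aᴴ * A).trace = ((∑ i, ∑ k, Complex.normSq (A k i) : ℝ) : ℂ) := by
  simp only [Matrix.trace, Matrix.diag, Matrix.mul_apply, Matrix.conjTranspose_apply]
  push_cast
  refine Finset.sum_congr rfl fun i _ => Finset.sum_congr rfl fun k _ => ?_
  exact Complex.normSq_eq_conj_mul_self.symm

end Stmt9Aux

open Stmt9Aux in
/-- each `e^{tL}` maps `P` bijectively onto `P`, and restricted to `P` it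
is a trace-preserving *-automorphism. -/
theorem stmt_9 (d : ℕ) (L : Md d →ₗ[ℂ] Md d)
    (h : ∀ t : ℝ, 0 ≤ t → IsUnitalChannel (expL L t)) :
    ∀ t : ℝ, 0 ≤ t →
      Set.BijOn (expL L t) (periphGen L : Set (Md d)) (periphGen L : Set (Md d)) ∧
      (∀ X ∈ periphGen L, ∀ Y ∈ periphGen L,
        expL L t (X * Y) = expL L t X * expL L t Y) ∧
      (∀ X ∈ periphGen L, expL L t Xᴴ = (expL L t X)ᴴ) ∧
      (∀ X ∈ periphGen L, (expL L t X).trace = X.trace) := by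
  intro t ht
  obtain ⟨hCP, hUn, hTr⟩ := h t ht
  obtain ⟨n, V, hV⟩ := hCP
  set Φ : Md d →ₗ[ℂ] Md d := expL L t with hΦdef
  -- Kraus unitality
  have hsumV : ∑ j, (V j)ᴴ * V j = 1 := by
    have h1 := hV 1
    rw [hUn] at h1
    simpa [Matrix.mul_one] using h1.symm
  -- Hermitian preserving
  have hHerm : ∀ X : Md d, Φ Xᴴ = (Φ X)ᴴ := by
    intro X
    rw [hV, hV, Matrix.conjTranspose_sum]
    exact Finset.sum_congr rfl fun j _ => by
      simp [Matrix.conjTranspose_mul, Matrix.mul_assoc]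
  -- eigenvalue fact
  have hA : ∀ (a : ℝ) (X : Md d), L X = ((a : ℂ) * Complex.I) • X →
      Φ X = Complex.exp ((t : ℂ) * ((a : ℂ) * Complex.I)) • X := by
    intro a X hX
    have hAX : ((t : ℂ) • (LinearMap.toContinuousLinearMap L)) X
        = ((t : ℂ) * ((a : ℂ) * Complex.I)) • X := by
      rw [ContinuousLinearMap.smul_apply, LinearMap.coe_toContinuousLinearMap', hX, smul_smul]
    exact exp_apply_eigen _ _ _ hAX
  -- unimodularity
  have hconj : ∀ a : ℝ, (starRingEnd ℂ) (Complex.exp ((t : ℂ) * ((a : ℂ) * Complex.I)))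
      * Complex.exp ((t : ℂ) * ((a : ℂ) * Complex.I)) = 1 := by
    intro a
    have hz : (starRingEnd ℂ) ((t : ℂ) * ((a : ℂ) * Complex.I))
        = -((t : ℂ) * ((a : ℂ) * Complex.I)) := by
      simp only [_root_.map_mul, Complex.conj_ofReal, Complex.conj_I]
      ring
    rw [← Complex.exp_conj, hz, ← Complex.exp_add, neg_add_cancel, Complex.exp_zero]
  -- injectivity of Φ
  have hinj : Function.Injective Φ := by
    intro X Y hXY
    set A := (t : ℂ) • (LinearMap.toContinuousLinearMap L) with hAdef
    have h1 : NormedSpace.exp (-A) * NormedSpace.exp A = 1 := by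
      have := NormedSpace.exp_add_of_commute (Commute.refl A).neg_left
      exact this.symm.trans ((congrArg NormedSpace.exp (neg_add_cancel A)).trans
        NormedSpace.exp_zero)
    have h2 : ∀ Z : Md d, NormedSpace.exp (-A) (NormedSpace.exp A Z) = Z := fun Z => by
      rw [← ContinuousLinearMap.mul_apply, h1, ContinuousLinearMap.one_apply]
    have hXY' : NormedSpace.exp A X = NormedSpace.exp A Y := hXY
    calc X = NormedSpace.exp (-A) (NormedSpace.exp A X) := (h2 X).symm
    _ = NormedSpace.exp (-A) (NormedSpace.exp A Y) := by rw [hXY']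
    _ = Y := h2 Y
  -- maps P into P
  have hmaps : ∀ X ∈ periphGen L, Φ X ∈ periphGen L := by
    have hle : periphGen L ≤ (periphGen L).comap Φ := by
      rw [periphGen]
      apply Submodule.span_le.mpr
      rintro X ⟨a, ha⟩
      have hx : X ∈ periphGen L := Submodule.subset_span ⟨a, ha⟩
      show Φ X ∈ periphGen L
      rw [hA a X ha]
      exact Submodule.smul_mem _ _ hx
    exact fun X hX => hle hX
  -- surjective onto P
  have hsurj : ∀ X ∈ periphGen L, ∃ Y ∈ periphGen L, Φ Y = X := by
    have hle : periphGen L ≤ (periphGen L).map Φ := by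
      nth_rewrite 1 [periphGen]
      apply Submodule.span_le.mpr
      rintro X ⟨a, ha⟩
      have hx : X ∈ periphGen L := Submodule.subset_span ⟨a, ha⟩
      refine ⟨(Complex.exp ((t : ℂ) * ((a : ℂ) * Complex.I)))⁻¹ • X,
        Submodule.smul_mem _ _ hx, ?_⟩
      rw [LinearMap.map_smul, hA a X ha, smul_smul, inv_mul_cancel₀ (Complex.exp_ne_zero _), one_smul]
    intro X hX
    obtain ⟨Y, hY, hYX⟩ := hle hX
    exact ⟨Y, hY, hYX⟩
  -- multiplicative domain : generators satisfy X * V j = V j * Φ X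
  have hkey : ∀ X ∈ {X : Md d | ∃ a : ℝ, L X = ((a : ℂ) * Complex.I) • X},
      ∀ j, X * V j = V j * Φ X := by
    rintro X ⟨a, ha⟩ j
    set μ := Complex.exp ((t : ℂ) * ((a : ℂ) * Complex.I)) with hμdef
    have hμX : Φ X = μ • X := hA a X ha
    have hμ1 : (starRingEnd ℂ) μ * μ = 1 := hconj a
    set W := Φ X with hWdef
    have hW : ∑ j, (V j)ᴴ * X * V j = W := (hV X).symm
    have hWH : ∑ j, (V j)ᴴ * Xᴴ * V j = Wᴴ := by
      rw [← hHerm X]; exact (hV Xᴴ).symm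
    have hdef := kraus_defect V hsumV X W hW hWH
    have hWW : Wᴴ * W = Xᴴ * X := by
      rw [hμX, Matrix.conjTranspose_smul, Matrix.smul_mul, Matrix.mul_smul, smul_smul,
        (show star μ * μ = 1 from hμ1), one_smul]
    have htr : (∑ j, (X * V j - V j * W)ᴴ * (X * V j - V j * W)).trace = 0 := by
      rw [hdef, Matrix.trace_sub, hWW]
      have : ∑ j, (V j)ᴴ * (Xᴴ * X) * V j = Φ (Xᴴ * X) := (hV (Xᴴ * X)).symm
      rw [this, hTr (Xᴴ * X), sub_self]
    -- turn into a sum of nonnegative reals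
    have htr' : ∑ j, ∑ i, ∑ k, Complex.normSq ((X * V j - V j * W) k i) = 0 := by
      have h0 : (↑(∑ j, ∑ i, ∑ k, Complex.normSq ((X * V j - V j * W) k i)) : ℂ) = 0 := by
        push_cast
        rw [← htr, Matrix.trace_sum]
        exact (Finset.sum_congr rfl fun j _ => by
          rw [trace_ct_mul_self]; push_cast; rfl).symm
      exact_mod_cast h0
    have hz : ∀ j' : Fin n, X * V j' - V j' * W = 0 := by
      intro j'
      have hnn : ∀ j'' ∈ Finset.univ (α := Fin n),
          0 ≤ ∑ i, ∑ k, Complex.normSq ((X * V j'' - V j'' * W) k i) :=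
        fun j'' _ => Finset.sum_nonneg fun i _ =>
          Finset.sum_nonneg fun k _ => Complex.normSq_nonneg _
      have hj := (Finset.sum_eq_zero_iff_of_nonneg hnn).mp htr' j' (Finset.mem_univ _)
      ext p q
      have hnn2 : ∀ i ∈ Finset.univ (α := Fin d),
          0 ≤ ∑ k, Complex.normSq ((X * V j' - V j' * W) k i) :=
        fun i _ => Finset.sum_nonneg fun k _ => Complex.normSq_nonneg _
      have hq := (Finset.sum_eq_zero_iff_of_nonneg hnn2).mp hj q (Finset.mem_univ _)
      have hnn3 : ∀ k ∈ Finset.univ (α := Fin d),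
          0 ≤ Complex.normSq ((X * V j' - V j' * W) k q) :=
        fun k _ => Complex.normSq_nonneg _
      have hpq := (Finset.sum_eq_zero_iff_of_nonneg hnn3).mp hq p (Finset.mem_univ _)
      simpa using Complex.normSq_eq_zero.mp hpq
    have := hz j
    rw [sub_eq_zero] at this
    rw [this, hWdef]
  -- the multiplicative-domain submodule
  have hQ : ∀ Y ∈ periphGen L, ∀ j, Y * V j = V j * Φ Y := by
    let Q : Submodule ℂ (Md d) :=
      { carrier := {Y : Md d | ∀ j, Y * V j = V j * Φ Y}
        zero_mem' := by intro j; simp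
        add_mem' := by
          intro Y Z hY hZ j
          rw [Matrix.add_mul, hY j, hZ j, map_add, Matrix.mul_add]
        smul_mem' := by
          intro c Y hY j
          rw [Matrix.smul_mul, hY j, LinearMap.map_smul, Matrix.mul_smul] }
    have hle : periphGen L ≤ Q := by
      rw [periphGen]
      exact Submodule.span_le.mpr hkey
    exact fun Y hY => hle hY
  refine ⟨⟨hmaps, hinj.injOn, fun X hX => ?_⟩, fun X hX Y hY => ?_, fun X _ => hHerm X,
    fun X _ => hTr X⟩
  · obtain ⟨Y, hY, hYX⟩ := hsurj X hX
    exact ⟨Y, hY, hYX⟩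
  · -- multiplicativity
    rw [hV (X * Y), hV X, Finset.sum_mul]
    refine Finset.sum_congr rfl fun j _ => ?_
    have h1 : (V j)ᴴ * (X * Y) * V j = (V j)ᴴ * X * (Y * V j) := by noncomm_ring
    rw [h1, hQ Y hY j]
    noncomm_ring
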